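/- Estimates of conditionally affine quantities are affine in the own estimate: let (Ω, ℱ, ℙ) be a probability space, V and Y integrable real-valued random variables, 𝒢 ⊆ ℱ a sub-σ-algebra, and e, f ∈ ℝ. If σ(Y) and 𝒢 are conditionally independent given σ(V), and E[Y | σ(V)] = e·V + f almost surely, then E[Y | 𝒢] = e·E[V | 𝒢] + f almost surely. -/

import Mathlib

open MeasureTheory ProbabilityTheory

/-- estimates of conditionally affine quantities are affine in the own
estimate.  Let `V, Y` be integrable real random variables, `G` a sub-σ-algebra, and
`e, f ∈ ℝ`.  If `σ(Y)` and `G` are conditionally independent given `σ(V)` (expressed,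
as in the paper, by the almost-sure factorization of the conditional probability of
intersections of events — hypothesis `hci`), and `E[Y | σ(V)] = e·V + f` a.s., then
`E[Y | G] = e·E[V | G] + f` a.s. -/
theorem condexp_of_conditionally_affine
    {Ω : Type*} [m : MeasurableSpace Ω] (μ : Measure Ω) [IsProbabilityMeasure μ]
    (V Y : Ω → ℝ) (hVm : Measurable V) (hYm : Measurable Y)
    (hVi : Integrable V μ) (hYi : Integrable Y μ)
    (G : MeasurableSpace Ω) (hG : G ≤ m)
    (e f : ℝ)
    (hci : ∀ A B : Set Ω,
      MeasurableSet[MeasurableSpace.comap Y inferInstance] A → MeasurableSet[G] B →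
      μ[(A ∩ B).indicator (fun _ => (1 : ℝ)) | MeasurableSpace.comap V inferInstance]
        =ᵐ[μ] fun ω =>
          (μ[A.indicator (fun _ => (1 : ℝ)) | MeasurableSpace.comap V inferInstance]) ω
            * (μ[B.indicator (fun _ => (1 : ℝ)) | MeasurableSpace.comap V inferInstance]) ω)
    (hYV : μ[Y | MeasurableSpace.comap V inferInstance] =ᵐ[μ] fun ω => e * V ω + f) :
    μ[Y | G] =ᵐ[μ] fun ω => e * (μ[V | G]) ω + f := by
  set mV := MeasurableSpace.comap V inferInstance with hmVdef
  set mY := MeasurableSpace.comap Y inferInstance with hmYdef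
  letI : MeasurableSpace Ω := m
  have hmV : mV ≤ m := hVm.comap_le
  have hmY : mY ≤ m := hYm.comap_le
  haveI : SigmaFinite (μ.trim hmV) := by infer_instance
  haveI : SigmaFinite (μ.trim hG) := by infer_instance
  haveI : SigmaFinite (μ.trim hmY) := by infer_instance
  -- Key step: for every `B ∈ G`, `∫_B Y = ∫_B E[Y | σ(V)]`.
  have key : ∀ B : Set Ω, MeasurableSet[G] B →
      ∫ ω in B, Y ω ∂μ = ∫ ω in B, (μ[Y|mV]) ω ∂μ := by
    intro B hB
    have hBm : MeasurableSet[m] B := hG B hB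
    set χ : Ω → ℝ := B.indicator (fun _ => (1 : ℝ)) with hχdef
    have hχint : Integrable χ μ :=
      Integrable.indicator (integrable_const (μ := μ) (1 : ℝ)) hBm
    have hχsm : AEStronglyMeasurable χ μ := hχint.aestronglyMeasurable
    have hχbd : ∀ ω, |χ ω| ≤ 1 := by
      intro ω
      by_cases hω : ω ∈ B <;> simp [hχdef, Set.indicator, hω]
    set h : Ω → ℝ := μ[χ|mV] with hhdef
    have hhbd : ∀ᵐ ω ∂μ, |h ω| ≤ 1 := by
      have h0 : (0 : Ω → ℝ) ≤ᵐ[μ] h :=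
        condExp_nonneg (by
          refine Filter.Eventually.of_forall fun ω => ?_
          by_cases hω : ω ∈ B <;> simp [hχdef, Set.indicator, hω])
      have h1 : h ≤ᵐ[μ] fun _ => (1 : ℝ) := by
        have h1' : h ≤ᵐ[μ] μ[(fun _ => (1 : ℝ))|mV] :=
          condExp_mono hχint (integrable_const (μ := μ) (1 : ℝ))
            (Filter.Eventually.of_forall fun ω => by
              by_cases hω : ω ∈ B <;> simp [hχdef, Set.indicator, hω])
        rwa [condExp_const (μ := μ) hmV (1 : ℝ)] at h1'
      filter_upwards [h0, h1] with ω h0ω h1ω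
      simp only [Pi.zero_apply] at h0ω
      rw [abs_le]
      exact ⟨by linarith, h1ω⟩
    -- integrability of E[g|σV] * h
    have hIntProd : ∀ g : Ω → ℝ, Integrable (fun ω => (μ[g|mV]) ω * h ω) μ := by
      intro g
      refine Integrable.mono' (integrable_condExp (m := mV) (f := g)).abs ?_ ?_
      · exact ((stronglyMeasurable_condExp.mono hmV).aestronglyMeasurable.mul
          (stronglyMeasurable_condExp.mono hmV).aestronglyMeasurable)
      · filter_upwards [hhbd] with ω hω
        rw [Real.norm_eq_abs, abs_mul]
        calc |(μ[g|mV]) ω| * |h ω| ≤ |(μ[g|mV]) ω| * 1 :=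
              mul_le_mul_of_nonneg_left hω (abs_nonneg _)
          _ = |(μ[g|mV]) ω| := mul_one _
    -- the property P
    set P : (Ω → ℝ) → Prop :=
      fun g => ∫ ω in B, g ω ∂μ = ∫ ω, (μ[g|mV]) ω * h ω ∂μ with hPdef
    -- base case: indicators of mY-measurable sets
    have hInd : ∀ (c : ℝ) (A : Set Ω), MeasurableSet[mY] A →
        P (A.indicator fun _ => c) := by
      intro c A hA
      have hcsmul : μ[A.indicator fun _ => c|mV]
          =ᵐ[μ] c • μ[A.indicator fun _ => (1 : ℝ)|mV] := by
        have hsmul : (A.indicator fun _ => c) = c • (A.indicator fun _ => (1 : ℝ)) := by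
          funext ω
          by_cases hω : ω ∈ A <;> simp [Set.indicator, hω]
        rw [hsmul]; exact condExp_smul c _ mV
      -- LHS
      have hLHS : ∫ ω in B, (A.indicator fun _ => c) ω ∂μ
          = c * ∫ ω, ((A ∩ B).indicator fun _ => (1 : ℝ)) ω ∂μ := by
        rw [← integral_indicator hBm]
        have : (B.indicator (A.indicator fun _ => c))
            = fun ω => c * ((A ∩ B).indicator fun _ => (1 : ℝ)) ω := by
          funext ω
          by_cases hωA : ω ∈ A <;> by_cases hωB : ω ∈ B <;>
            simp [Set.indicator, hωA, hωB]
        rw [this, integral_const_mul]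
      have hAB : ∫ ω, ((A ∩ B).indicator fun _ => (1 : ℝ)) ω ∂μ
          = ∫ ω, (μ[A.indicator fun _ => (1 : ℝ)|mV]) ω * h ω ∂μ := by
        rw [← integral_condExp (μ := μ) hmV
          (f := ((A ∩ B).indicator fun _ => (1 : ℝ)))]
        exact integral_congr_ae (hci A B hA hB)
      -- RHS
      have hRHS : ∫ ω, (μ[A.indicator fun _ => c|mV]) ω * h ω ∂μ
          = c * ∫ ω, (μ[A.indicator fun _ => (1 : ℝ)|mV]) ω * h ω ∂μ := by
        rw [← integral_const_mul]
        refine integral_congr_ae ?_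
        filter_upwards [hcsmul] with ω hω
        rw [hω]; simp [mul_assoc]
      simp only [hPdef]
      rw [hLHS, hAB, hRHS]
    -- every mY-simple function is integrable
    have hSimpInt : ∀ s : @SimpleFunc Ω mY ℝ, Integrable (⇑s) μ := by
      intro s
      obtain ⟨C, hC⟩ := @SimpleFunc.exists_forall_norm_le Ω ℝ mY _ s
      exact Integrable.mono' (integrable_const (μ := μ) C)
        ((s.stronglyMeasurable.mono hmY).aestronglyMeasurable)
        (Filter.Eventually.of_forall hC)
    -- P holds for every mY-simple function
    have hSimple : ∀ s : @SimpleFunc Ω mY ℝ, P ⇑s := by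
      intro s
      refine @SimpleFunc.induction Ω ℝ mY _ (fun s => P ⇑s) ?_ ?_ s
      · intro c A hA
        have hcoe : ⇑(@SimpleFunc.piecewise Ω ℝ mY A hA
              (@SimpleFunc.const Ω ℝ mY c) (@SimpleFunc.const Ω ℝ mY (0 : ℝ)))
            = A.indicator fun _ => c := by
          funext ω
          by_cases hω : ω ∈ A <;>
            simp [SimpleFunc.piecewise_apply, Set.indicator, hω]
        rw [hcoe]
        exact hInd c A hA
      · intro s₁ s₂ _ hP1 hP2
        have h1 : Integrable (⇑s₁) μ := hSimpInt s₁
        have h2 : Integrable (⇑s₂) μ := hSimpInt s₂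
        have hadd : μ[⇑s₁ + ⇑s₂|mV] =ᵐ[μ] μ[⇑s₁|mV] + μ[⇑s₂|mV] := condExp_add h1 h2 mV
        have hthis : P (⇑s₁ + ⇑s₂) := by
          simp only [hPdef]
          have hL : ∫ ω in B, (⇑s₁ + ⇑s₂) ω ∂μ
              = (∫ ω in B, s₁ ω ∂μ) + ∫ ω in B, s₂ ω ∂μ :=
            integral_add h1.integrableOn h2.integrableOn
          have hR : ∫ ω, (μ[⇑s₁ + ⇑s₂|mV]) ω * h ω ∂μ
              = (∫ ω, (μ[⇑s₁|mV]) ω * h ω ∂μ) + ∫ ω, (μ[⇑s₂|mV]) ω * h ω ∂μ := by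
            rw [← integral_add (hIntProd _) (hIntProd _)]
            refine integral_congr_ae ?_
            filter_upwards [hadd] with ω hω
            simp only [Pi.add_apply] at hω ⊢
            rw [hω, add_mul]
          rw [hL, hR, hP1, hP2]
        simpa using hthis
    -- P holds for Y, by L¹ approximation
    have hYsmY : StronglyMeasurable[mY] Y :=
      (measurable_iff_comap_le.mpr le_rfl).stronglyMeasurable
    have hYmY : @Measurable Ω ℝ mY _ Y := measurable_iff_comap_le.mpr le_rfl
    set F : ℕ → @SimpleFunc Ω mY ℝ :=
      fun n => @SimpleFunc.approxOn ℝ Ω _ _ _ mY Y hYmY Set.univ 0 (Set.mem_univ 0) _ n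
      with hFdef
    have hFY : Filter.Tendsto (fun n => eLpNorm (⇑(F n) - Y) 1 μ)
        Filter.atTop (nhds 0) := by
      have hYint' : eLpNorm (fun x => Y x - 0) 1 (μ.trim hmY) < ⊤ := by
        simp only [sub_zero]
        rw [eLpNorm_trim hmY hYsmY]
        exact (memLp_one_iff_integrable.mpr hYi).eLpNorm_lt_top
      have happ := @SimpleFunc.tendsto_approxOn_Lp_eLpNorm Ω ℝ mY _ _ 1 _ Y hYmY
        Set.univ 0 (Set.mem_univ 0) _ ENNReal.one_ne_top (μ.trim hmY)
        (Filter.Eventually.of_forall fun x => by simp)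
        hYint'
      have heq : ∀ n, eLpNorm (⇑(F n) - Y) 1 (μ.trim hmY)
          = eLpNorm (⇑(F n) - Y) 1 μ := fun n =>
        eLpNorm_trim hmY ((F n).stronglyMeasurable.sub hYsmY)
      exact (Filter.tendsto_congr heq).mp happ
    -- the error terms
    set ε : ℕ → ℝ := fun n => ∫ ω, |Y ω - F n ω| ∂μ with hεdef
    have hFint : ∀ n, Integrable (⇑(F n)) μ := fun n => hSimpInt (F n)
    have hdiffint : ∀ n, Integrable (fun ω => Y ω - F n ω) μ :=
      fun n => hYi.sub (hFint n)
    have hεto : Filter.Tendsto ε Filter.atTop (nhds 0) := by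
      have htoReal : Filter.Tendsto (fun n => (eLpNorm (⇑(F n) - Y) 1 μ).toReal)
          Filter.atTop (nhds 0) := by
        have hcomp := (ENNReal.tendsto_toReal (a := 0) (by simp)).comp hFY
        exact hcomp
      refine htoReal.congr fun n => ?_
      have h1 : eLpNorm (⇑(F n) - Y) 1 μ = eLpNorm (fun ω => Y ω - F n ω) 1 μ := by
        rw [← eLpNorm_neg]
        congr 1
        funext ω; simp
      rw [h1, eLpNorm_one_eq_lintegral_enorm,
        ← integral_norm_eq_lintegral_enorm (hdiffint n).aestronglyMeasurable]
      rw [hεdef]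
      refine integral_congr_ae (Filter.Eventually.of_forall fun ω => ?_)
      simp [Real.norm_eq_abs]
    -- |I₁ - I₂| ≤ 2 εₙ for all n, hence P Y
    have hPY : P Y := by
      simp only [hPdef]
      have hDbound : ∀ n,
          |(∫ ω in B, Y ω ∂μ) - ∫ ω, (μ[Y|mV]) ω * h ω ∂μ| ≤ 2 * ε n := by
        intro n
        have hPn := hSimple (F n)
        simp only [hPdef] at hPn
        have hD : (∫ ω in B, Y ω ∂μ) - ∫ ω, (μ[Y|mV]) ω * h ω ∂μ
            = ((∫ ω in B, Y ω ∂μ) - ∫ ω in B, F n ω ∂μ)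
            + ((∫ ω, (μ[⇑(F n)|mV]) ω * h ω ∂μ) - ∫ ω, (μ[Y|mV]) ω * h ω ∂μ) := by
          rw [hPn]; ring
        have h1 : |(∫ ω in B, Y ω ∂μ) - ∫ ω in B, F n ω ∂μ| ≤ ε n := by
          rw [← integral_sub hYi.integrableOn (hFint n).integrableOn]
          calc |∫ ω in B, (Y ω - F n ω) ∂μ| ≤ ∫ ω in B, |Y ω - F n ω| ∂μ := by
                have := norm_integral_le_integral_norm (μ := μ.restrict B)
                  (fun ω => Y ω - F n ω)
                simpa [Real.norm_eq_abs] using this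
            _ ≤ ∫ ω, |Y ω - F n ω| ∂μ :=
                setIntegral_le_integral (hdiffint n).abs
                  (Filter.Eventually.of_forall fun ω => abs_nonneg _)
        have h2 : |(∫ ω, (μ[⇑(F n)|mV]) ω * h ω ∂μ)
            - ∫ ω, (μ[Y|mV]) ω * h ω ∂μ| ≤ ε n := by
          rw [← integral_sub (hIntProd _) (hIntProd _)]
          have hsub : μ[⇑(F n)|mV] - μ[Y|mV] =ᵐ[μ] μ[⇑(F n) - Y|mV] :=
            (condExp_sub (hFint n) hYi mV).symm
          calc |∫ ω, ((μ[⇑(F n)|mV]) ω * h ω - (μ[Y|mV]) ω * h ω) ∂μ|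
              ≤ ∫ ω, |(μ[⇑(F n)|mV]) ω * h ω - (μ[Y|mV]) ω * h ω| ∂μ := by
                have := norm_integral_le_integral_norm (μ := μ)
                  (fun ω => (μ[⇑(F n)|mV]) ω * h ω - (μ[Y|mV]) ω * h ω)
                simpa [Real.norm_eq_abs] using this
            _ ≤ ∫ ω, |(μ[⇑(F n) - Y|mV]) ω| ∂μ := by
                refine integral_mono_ae ((hIntProd _).sub (hIntProd _)).abs
                  (integrable_condExp (m := mV) (f := ⇑(F n) - Y)).abs ?_
                filter_upwards [hhbd, hsub] with ω hω hsω
                have hfac : (μ[⇑(F n)|mV]) ω * h ω - (μ[Y|mV]) ω * h ω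
                    = ((μ[⇑(F n)|mV]) ω - (μ[Y|mV]) ω) * h ω := by ring
                have hrw : (μ[⇑(F n)|mV]) ω - (μ[Y|mV]) ω
                    = (μ[⇑(F n) - Y|mV]) ω := hsω
                rw [hfac, abs_mul, hrw]
                calc |(μ[⇑(F n) - Y|mV]) ω| * |h ω|
                    ≤ |(μ[⇑(F n) - Y|mV]) ω| * 1 :=
                      mul_le_mul_of_nonneg_left hω (abs_nonneg _)
                  _ = _ := mul_one _
            _ ≤ ∫ ω, |(⇑(F n) - Y) ω| ∂μ := integral_abs_condExp_le _
            _ = ε n := by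
                rw [hεdef]
                refine integral_congr_ae (Filter.Eventually.of_forall fun ω => ?_)
                simp [abs_sub_comm]
        calc |(∫ ω in B, Y ω ∂μ) - ∫ ω, (μ[Y|mV]) ω * h ω ∂μ|
            ≤ |(∫ ω in B, Y ω ∂μ) - ∫ ω in B, F n ω ∂μ|
            + |(∫ ω, (μ[⇑(F n)|mV]) ω * h ω ∂μ) - ∫ ω, (μ[Y|mV]) ω * h ω ∂μ| := by
              rw [hD]; exact abs_add_le _ _
          _ ≤ ε n + ε n := add_le_add h1 h2
          _ = 2 * ε n := by ring
      have habs : |(∫ ω in B, Y ω ∂μ) - ∫ ω, (μ[Y|mV]) ω * h ω ∂μ| ≤ 0 := by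
        have h2ε : Filter.Tendsto (fun n => 2 * ε n) Filter.atTop (nhds 0) := by
          have := hεto.const_mul 2
          simpa using this
        exact ge_of_tendsto' h2ε hDbound
      have hzero : (∫ ω in B, Y ω ∂μ) - ∫ ω, (μ[Y|mV]) ω * h ω ∂μ = 0 :=
        abs_eq_zero.mp (le_antisymm habs (abs_nonneg _))
      linarith
    -- finally: ∫ E[Y|mV]·h = ∫_B E[Y|mV]
    have hstep3 : ∫ ω, (μ[Y|mV]) ω * h ω ∂μ = ∫ ω in B, (μ[Y|mV]) ω ∂μ := by
      have hprodint : Integrable (μ[Y|mV] * χ) μ := by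
        refine Integrable.mono' (integrable_condExp (m := mV) (f := Y)).abs ?_ ?_
        · exact (stronglyMeasurable_condExp.mono hmV).aestronglyMeasurable.mul hχsm
        · refine Filter.Eventually.of_forall fun ω => ?_
          rw [Pi.mul_apply, Real.norm_eq_abs, abs_mul]
          calc |(μ[Y|mV]) ω| * |χ ω| ≤ |(μ[Y|mV]) ω| * 1 :=
                mul_le_mul_of_nonneg_left (hχbd ω) (abs_nonneg _)
            _ = _ := mul_one _
      have hpull : μ[μ[Y|mV] * χ|mV] =ᵐ[μ] μ[Y|mV] * h :=
        condExp_mul_of_stronglyMeasurable_left stronglyMeasurable_condExp hprodint hχint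
      calc ∫ ω, (μ[Y|mV]) ω * h ω ∂μ = ∫ ω, (μ[μ[Y|mV] * χ|mV]) ω ∂μ :=
            (integral_congr_ae hpull).symm
        _ = ∫ ω, ((μ[Y|mV]) * χ) ω ∂μ := integral_condExp (μ := μ) hmV
        _ = ∫ ω, B.indicator (μ[Y|mV]) ω ∂μ := by
            refine integral_congr_ae (Filter.Eventually.of_forall fun ω => ?_)
            by_cases hω : ω ∈ B <;> simp [hχdef, Set.indicator, hω]
        _ = ∫ ω in B, (μ[Y|mV]) ω ∂μ := integral_indicator hBm
    simp only [hPdef] at hPY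
    rw [hPY, hstep3]
  -- Conclusion
  have hg_meas : AEStronglyMeasurable[G] (fun ω => e * (μ[V|G]) ω + f) μ := by
    refine StronglyMeasurable.aestronglyMeasurable ?_
    exact (stronglyMeasurable_condExp.const_mul e).add_const f
  have hg_int : Integrable (fun ω => e * (μ[V|G]) ω + f) μ :=
    ((integrable_condExp (m := G) (f := V)).const_mul e).add (integrable_const (μ := μ) f)
  have heq : ∀ s : Set Ω, MeasurableSet[G] s → μ s < ⊤ →
      ∫ ω in s, (e * (μ[V|G]) ω + f) ∂μ = ∫ ω in s, Y ω ∂μ := by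
    intro s hs _
    have hsm : MeasurableSet[m] s := hG s hs
    have h1 : ∫ ω in s, (e * (μ[V|G]) ω + f) ∂μ
        = e * (∫ ω in s, (μ[V|G]) ω ∂μ) + (μ s).toReal * f := by
      rw [integral_add ((integrable_condExp (m := G) (f := V)).const_mul e).integrableOn
        (integrable_const (μ := μ) f).integrableOn]
      rw [integral_const_mul, setIntegral_const]
      simp [smul_eq_mul, measureReal_def]
    have h2 : ∫ ω in s, (μ[V|G]) ω ∂μ = ∫ ω in s, V ω ∂μ :=
      setIntegral_condExp hG hVi hs
    have h3 : ∫ ω in s, (e * V ω + f) ∂μ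
        = e * (∫ ω in s, V ω ∂μ) + (μ s).toReal * f := by
      rw [integral_add (hVi.const_mul e).integrableOn
        (integrable_const (μ := μ) f).integrableOn]
      rw [integral_const_mul, setIntegral_const]
      simp [smul_eq_mul, measureReal_def]
    have h4 : ∫ ω in s, (μ[Y|mV]) ω ∂μ = ∫ ω in s, (e * V ω + f) ∂μ :=
      setIntegral_congr_ae hsm (hYV.mono fun ω hω _ => hω)
    rw [h1, h2, ← h3, ← h4, ← key s hs]
  exact (ae_eq_condExp_of_forall_setIntegral_eq hG hYi
    (fun s _ _ => hg_int.integrableOn) heq hg_meas).symm
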